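/- Let q be a power of the prime p, ω a generator of the group of multiplicative characters of 𝔽_q^×, and let α = (α_1,…,α_d), β = (β_1,…,β_d) be multisets of rational numbers, disjoint modulo ℤ, with (q−1)α_i ∈ ℤ and (q−1)β_j ∈ ℤ for all i, j. Then the value H_q(α,β|t) is independent of the choice of primitive p-th root of unity: if ζ and ζ' are two primitive p-th roots of unity in ℂ, the finite hypergeometric sums defined using the additive characters ζ^{Tr_{𝔽_q/𝔽_p}(·)} and ζ'^{Tr_{𝔽_q/𝔽_p}(·)} are equal for every t ∈ 𝔽_q. -/

import Mathlib

open scoped BigOperators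

/-- The Gauss sum `g(k) = ∑_{x ∈ 𝔽_q^×} ω(x)^k ψ_q(x)` over the finite field `𝔽_q`,
where `ψ_q(x) = ζ^{Tr_{𝔽_q/𝔽_p}(x)}`. -/
noncomputable def fieldGaussSum (p : ℕ) [Fact p.Prime] (F : Type*) [Field F] [Fintype F]
    [DecidableEq F] [Algebra (ZMod p) F] (ζ : ℂ) (ω : MulChar F ℂ) (k : ℤ) : ℂ :=
  ∑ x : Fˣ, (ω (x : F)) ^ k * ζ ^ (Algebra.trace (ZMod p) F (x : F)).val

/-- The finite hypergeometric sum
`H_q(α,β|t) = (1/(1−q)) ∑_{m=0}^{q−2}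
  ∏ᵢ (g(m+(q−1)αᵢ) g(−m−(q−1)βᵢ) / (g((q−1)αᵢ) g(−(q−1)βᵢ))) · ω((−1)^d t)^m`,
expressed via the integers `aᵢ = (q−1)αᵢ` and `bᵢ = (q−1)βᵢ`. -/
noncomputable def finHG (p : ℕ) [Fact p.Prime] (F : Type*) [Field F] [Fintype F]
    [DecidableEq F] [Algebra (ZMod p) F] (ζ : ℂ) (ω : MulChar F ℂ)
    (d : ℕ) (a b : Fin d → ℤ) (t : F) : ℂ :=
  (1 / (1 - (Fintype.card F : ℂ))) *
    ∑ m ∈ Finset.range (Fintype.card F - 1),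
      (∏ i, (fieldGaussSum p F ζ ω ((m : ℤ) + a i) *
            fieldGaussSum p F ζ ω (-(m : ℤ) - b i)) /
          (fieldGaussSum p F ζ ω (a i) * fieldGaussSum p F ζ ω (-(b i)))) *
        (ω ((-1) ^ d * t)) ^ m

/-- Changing the root of unity `ζ` to `ζ ^ s` (with `s` coprime to `p`) multiplies the
Gauss sum `g(k)` by `ω(s)^(-k)`. -/
lemma fieldGaussSum_pow (p : ℕ) [Fact p.Prime] (F : Type*) [Field F] [Fintype F]
    [DecidableEq F] [Algebra (ZMod p) F] (ζ : ℂ) (hζ : IsPrimitiveRoot ζ p)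
    (ω : MulChar F ℂ) (s : ℕ) (hs : Nat.Coprime s p) (k : ℤ) :
    fieldGaussSum p F (ζ ^ s) ω k =
      (ω (algebraMap (ZMod p) F (s : ZMod p))) ^ (-k) * fieldGaussSum p F ζ ω k := by
  have hp : p.Prime := Fact.out
  haveI : NeZero p := ⟨hp.ne_zero⟩
  set c : F := algebraMap (ZMod p) F (s : ZMod p) with hc
  have hs0 : (s : ZMod p) ≠ 0 := by
    rw [Ne, ZMod.natCast_eq_zero_iff]
    intro h
    exact hp.ne_one (Nat.eq_one_of_dvd_one (hs ▸ Nat.dvd_gcd h dvd_rfl))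
  have hc0 : c ≠ 0 := by
    simpa only [hc, Ne, map_eq_zero_iff _ (algebraMap (ZMod p) F).injective] using hs0
  set u : Fˣ := Units.mk0 c hc0 with hu
  have hpow : ∀ a b : ℕ, a % p = b % p → ζ ^ a = ζ ^ b := by
    intro a b h
    conv_lhs => rw [← Nat.div_add_mod a p]
    conv_rhs => rw [← Nat.div_add_mod b p]
    rw [pow_add, pow_add, pow_mul, pow_mul, hζ.pow_eq_one, one_pow, one_pow, h]
  -- each term with `ζ^s` equals the term of `ζ` at the point `c * x`
  have key : ∀ x : Fˣ, (ζ ^ s) ^ (Algebra.trace (ZMod p) F (x : F)).val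
      = ζ ^ (Algebra.trace (ZMod p) F ((u * x : Fˣ) : F)).val := by
    intro x
    have htr : Algebra.trace (ZMod p) F ((u * x : Fˣ) : F)
        = (s : ZMod p) * Algebra.trace (ZMod p) F (x : F) := by
      have : ((u * x : Fˣ) : F) = (s : ZMod p) • (x : F) := by
        simp [hu, Units.val_mul, Algebra.smul_def, hc]
      rw [this, map_smul, smul_eq_mul]
    rw [← pow_mul, htr]
    refine hpow _ _ ?_
    have hcast : ((s * (Algebra.trace (ZMod p) F (x : F)).val : ℕ) : ZMod p)
        = ((((s : ZMod p) * Algebra.trace (ZMod p) F (x : F)).val : ℕ) : ZMod p) := by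
      push_cast
      simp [ZMod.natCast_val, ZMod.cast_id]
    exact (ZMod.natCast_eq_natCast_iff _ _ _).mp hcast
  -- reindex the sum by `x ↦ u⁻¹ * x`
  have hωu : ω ((u⁻¹ : Fˣ) : F) = (ω c)⁻¹ := by
    have h1 : ω ((u⁻¹ : Fˣ) : F) * ω c = 1 := by
      rw [← map_mul]
      have : ((u⁻¹ : Fˣ) : F) * c = 1 := by
        rw [hu, Units.val_inv_eq_inv_val, Units.val_mk0, inv_mul_cancel₀ hc0]
      rw [this, map_one]
    exact eq_inv_of_mul_eq_one_left h1
  calc fieldGaussSum p F (ζ ^ s) ω k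
      = ∑ x : Fˣ, (ω (x : F)) ^ k * ζ ^ (Algebra.trace (ZMod p) F ((u * x : Fˣ) : F)).val := by
        unfold fieldGaussSum
        exact Finset.sum_congr rfl fun x _ => by rw [key]
    _ = ∑ x : Fˣ, (ω (((u⁻¹ * x : Fˣ)) : F)) ^ k * ζ ^ (Algebra.trace (ZMod p) F (x : F)).val := by
        rw [← Equiv.sum_comp (Equiv.mulLeft (u⁻¹ : Fˣ))
          (fun x : Fˣ => (ω ((x : Fˣ) : F)) ^ k *
            ζ ^ (Algebra.trace (ZMod p) F ((u * x : Fˣ) : F)).val)]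
        refine Finset.sum_congr rfl fun x _ => ?_
        simp
    _ = (ω c) ^ (-k) * fieldGaussSum p F ζ ω k := by
        unfold fieldGaussSum
        rw [Finset.mul_sum]
        refine Finset.sum_congr rfl fun x _ => ?_
        have : ω (((u⁻¹ * x : Fˣ)) : F) = (ω c)⁻¹ * ω (x : F) := by
          rw [Units.val_mul, map_mul, hωu]
        rw [this, mul_zpow, inv_zpow, ← zpow_neg, mul_assoc]

theorem finHG_indep_of_zeta
    (p : ℕ) [Fact p.Prime] (F : Type*) [Field F] [Fintype F] [DecidableEq F]
    [Algebra (ZMod p) F]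
    (ζ ζ' : ℂ) (hζ : IsPrimitiveRoot ζ p) (hζ' : IsPrimitiveRoot ζ' p)
    (ω : MulChar F ℂ) (hω : Function.Injective fun x : Fˣ => ω (x : F))
    (d : ℕ) (α β : Fin d → ℚ)
    (hdisj : ∀ i j, ¬ ∃ n : ℤ, α i - β j = (n : ℚ))
    (a b : Fin d → ℤ)
    (ha : ∀ i, (a i : ℚ) = ((Fintype.card F : ℚ) - 1) * α i)
    (hb : ∀ j, (b j : ℚ) = ((Fintype.card F : ℚ) - 1) * β j)
    (t : F) :
    finHG p F ζ ω d a b t = finHG p F ζ' ω d a b t := by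
  have hp : p.Prime := Fact.out
  haveI : NeZero p := ⟨hp.ne_zero⟩
  obtain ⟨s, -, hs, rfl⟩ := hζ.isPrimitiveRoot_iff.mp hζ'
  set c : F := algebraMap (ZMod p) F (s : ZMod p) with hc
  have hs0 : (s : ZMod p) ≠ 0 := by
    rw [Ne, ZMod.natCast_eq_zero_iff]
    intro h
    exact hp.ne_one (Nat.eq_one_of_dvd_one (hs ▸ Nat.dvd_gcd h dvd_rfl))
  have hc0 : c ≠ 0 := by
    simpa only [hc, Ne, map_eq_zero_iff _ (algebraMap (ZMod p) F).injective] using hs0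
  have hωc : ω c ≠ 0 := by
    intro h0
    have h1 : ω c * ω c⁻¹ = 1 := by
      rw [← map_mul, mul_inv_cancel₀ hc0, map_one]
    rw [h0, zero_mul] at h1
    exact one_ne_zero h1.symm
  set w : ℂ := ω c with hw
  unfold finHG
  congr 1
  refine Finset.sum_congr rfl fun m _ => ?_
  congr 1
  refine Finset.prod_congr rfl fun i _ => ?_
  rw [fieldGaussSum_pow p F ζ hζ ω s hs, fieldGaussSum_pow p F ζ hζ ω s hs,
    fieldGaussSum_pow p F ζ hζ ω s hs, fieldGaussSum_pow p F ζ hζ ω s hs]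
  rw [← hc, ← hw]
  have hnum : w ^ (-((m : ℤ) + a i)) * w ^ (-(-(m : ℤ) - b i)) = w ^ (b i - a i) := by
    rw [← zpow_add₀ hωc]; ring_nf
  have hden : w ^ (-(a i)) * w ^ (-(-(b i))) = w ^ (b i - a i) := by
    rw [← zpow_add₀ hωc]; ring_nf
  have hwba : w ^ (b i - a i) ≠ 0 := zpow_ne_zero _ hωc
  set g1 := fieldGaussSum p F ζ ω ((m : ℤ) + a i)
  set g2 := fieldGaussSum p F ζ ω (-(m : ℤ) - b i)
  set g3 := fieldGaussSum p F ζ ω (a i)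
  set g4 := fieldGaussSum p F ζ ω (-(b i))
  symm
  calc (w ^ (-((m : ℤ) + a i)) * g1 * (w ^ (-(-(m : ℤ) - b i)) * g2)) /
        (w ^ (-(a i)) * g3 * (w ^ (-(-(b i))) * g4))
      = (w ^ (-((m : ℤ) + a i)) * w ^ (-(-(m : ℤ) - b i)) * (g1 * g2)) /
        (w ^ (-(a i)) * w ^ (-(-(b i))) * (g3 * g4)) := by ring
    _ = (w ^ (b i - a i) * (g1 * g2)) / (w ^ (b i - a i) * (g3 * g4)) := by rw [hnum, hden]
    _ = (g1 * g2) / (g3 * g4) := mul_div_mul_left _ _ hwba
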